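/- In the 1-standard case with Π(1) = {α̃}: η(W⁰_min) = {η(w) : k_α(w) ≥ −1 for all α ∈ Π} and η(W⁰_max) = {η(w) : k_α(w) ≤ 1 for all α ∈ Π}. In particular, if α̃ corresponds to a minuscule coweight (i.e., (ϖ_{α̃}^∨, γ) ∈ {−1,0,1} for all γ ∈ Δ, the abelian case), then W⁰_min = W⁰_max = W⁰. -/

import Mathlib

open RealInnerProductSpace

variable {V : Type*} [NormedAddCommGroup V] [InnerProductSpace ℝ V] [FiniteDimensional ℝ V]

/-- The orthogonal reflection in the hyperplane orthogonal to `α`. -/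
noncomputable def sref (α : V) : V ≃ₗ[ℝ] V :=
  (Submodule.reflection ((ℝ ∙ α)ᗮ)).toLinearEquiv

/-- `Δ` is an (irreducible, crystallographic, reduced) root system, equipped with a
`ℤ`-grading `d` (so that `Δ(i) = {γ ∈ Δ | d γ = i}`) and a compatible set `Pos = Δ⁺`
of positive roots (compatibility: every root of level `≥ 1` is positive). -/
structure GradedRootSystem (Δ : Set V) (d : V → ℤ) (Pos : Set V) : Prop where
  finite : Δ.Finite
  span_top : Submodule.span ℝ Δ = ⊤
  nonzero : ∀ α ∈ Δ, α ≠ 0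
  neg_mem : ∀ α ∈ Δ, -α ∈ Δ
  reduced : ∀ α ∈ Δ, ∀ c : ℝ, c • α ∈ Δ → c = 1 ∨ c = -1
  reflect_mem : ∀ α ∈ Δ, ∀ β ∈ Δ, β - (2 * ⟪β, α⟫ / ⟪α, α⟫) • α ∈ Δ
  crystallographic : ∀ α ∈ Δ, ∀ β ∈ Δ, ∃ n : ℤ, (n : ℝ) = 2 * ⟪β, α⟫ / ⟪α, α⟫
  irreducible : ∀ Δ₁ Δ₂ : Set V, Δ = Δ₁ ∪ Δ₂ → (∀ a ∈ Δ₁, ∀ b ∈ Δ₂, ⟪a, b⟫ = 0) →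
    Δ₁ = ∅ ∨ Δ₂ = ∅
  grade_add : ∀ γ₁ ∈ Δ, ∀ γ₂ ∈ Δ, γ₁ + γ₂ ∈ Δ → d (γ₁ + γ₂) = d γ₁ + d γ₂
  grade_neg : ∀ γ ∈ Δ, d (-γ) = - d γ
  pos_subset : Pos ⊆ Δ
  pos_iff : ∀ γ ∈ Δ, (γ ∈ Pos ↔ -γ ∉ Pos)
  pos_add : ∀ γ₁ ∈ Pos, ∀ γ₂ ∈ Pos, γ₁ + γ₂ ∈ Δ → γ₁ + γ₂ ∈ Pos
  compatible : ∀ γ ∈ Δ, 1 ≤ d γ → γ ∈ Pos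

/-- The level set `Δ(i)` of the grading. -/
def level (Δ : Set V) (d : V → ℤ) (i : ℤ) : Set V := {γ ∈ Δ | d γ = i}

/-- `Δ(≥ k)`. -/
def levelGE (Δ : Set V) (d : V → ℤ) (k : ℤ) : Set V := {γ ∈ Δ | k ≤ d γ}

/-- `Δ(≤ k)`. -/
def levelLE (Δ : Set V) (d : V → ℤ) (k : ℤ) : Set V := {γ ∈ Δ | d γ ≤ k}

/-- `Δ(0)⁺`, the positive part of `Δ(0)`. -/
def pos0 (d : V → ℤ) (Pos : Set V) : Set V := {γ ∈ Pos | d γ = 0}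

/-- The simple roots of a positive system `P`: positive roots that are not the sum
of two positive roots. -/
def simpleRoots (P : Set V) : Set V := {γ ∈ P | ¬ ∃ a ∈ P, ∃ b ∈ P, γ = a + b}

/-- `idealPow Δ I k = I^k`, with `I¹ = I` and `I^{k+1} = (I + I^k) ∩ Δ`
(and `I⁰ = ∅` by convention). -/
def idealPow (Δ I : Set V) : ℕ → Set V
  | 0 => ∅
  | 1 => I
  | (k+2) => {x ∈ Δ | ∃ a ∈ I, ∃ b ∈ idealPow Δ I (k+1), x = a + b}

/-- `⟨I⟩ = ⋃_{k ≥ 1} I^k`. -/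
def gen (Δ I : Set V) : Set V := ⋃ k : ℕ, idealPow Δ I (k+1)

/-- A subset `M` of roots is closed if it is closed under root addition. -/
def IsClosedSubset (Δ M : Set V) : Prop :=
  ∀ γ₁ ∈ M, ∀ γ₂ ∈ M, γ₁ + γ₂ ∈ Δ → γ₁ + γ₂ ∈ M

/-- Bi-convexity of `M ⊆ Δ⁺`: both `M` and `Δ⁺ \ M` are closed. -/
def IsBiConvex (Δ Pos M : Set V) : Prop :=
  IsClosedSubset Δ M ∧ IsClosedSubset Δ (Pos \ M)

/-- The partial order on each level `Δ(i)`: `γ' ≼ γ` iff `γ - γ'` is a nonnegative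
integral combination of the simple roots `Π(0)` of `Δ(0)⁺`. -/
def leLevel (d : V → ℤ) (Pos : Set V) (γ' γ : V) : Prop :=
  γ - γ' ∈ AddSubmonoid.closure (simpleRoots (pos0 d Pos))

/-- A lower ideal of the weight poset `Δ(i)`. -/
def IsLowerIdeal (Δ : Set V) (d : V → ℤ) (Pos : Set V) (i : ℤ) (I : Set V) : Prop :=
  I ⊆ level Δ d i ∧ ∀ γ ∈ I, ∀ ν ∈ level Δ d i, leLevel d Pos ν γ → ν ∈ I

/-- An upper ideal of the weight poset `Δ(i)`. -/
def IsUpperIdeal (Δ : Set V) (d : V → ℤ) (Pos : Set V) (i : ℤ) (I : Set V) : Prop :=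
  I ⊆ level Δ d i ∧ ∀ γ ∈ I, ∀ ν ∈ level Δ d i, leLevel d Pos γ ν → ν ∈ I

/-- The Weyl group of the set of roots `S`: the subgroup of `GL(V)` generated by the
reflections `s_α`, `α ∈ S`. -/
noncomputable def weyl (S : Set V) : Subgroup (V ≃ₗ[ℝ] V) :=
  Subgroup.closure {g | ∃ α ∈ S, g = sref α}

/-- The inversion set `N(w) = {γ ∈ Δ⁺ | -w(γ) ∈ Δ⁺}`. -/
def invSet (Pos : Set V) (w : V ≃ₗ[ℝ] V) : Set V := {γ ∈ Pos | -(w γ) ∈ Pos}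

/-- `W⁰`, the minimal length coset representatives of `W/W(0)`:
elements of `W` sending `Δ(0)⁺` into `Δ⁺`. -/
noncomputable def W0 (Δ : Set V) (d : V → ℤ) (Pos : Set V) : Set (V ≃ₗ[ℝ] V) :=
  {w | w ∈ weyl Δ ∧ ∀ γ ∈ pos0 d Pos, w γ ∈ Pos}

/-- `W⁰_min`: the set of elements `w ∈ W⁰` that are of minimal length in the fiber
`τ⁻¹(N(w) ∩ Δ(1))`, i.e. the minimal elements `w_{I,min}` of all lower ideals `I`. -/
noncomputable def Wmin (Δ : Set V) (d : V → ℤ) (Pos : Set V) : Set (V ≃ₗ[ℝ] V) :=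
  {w ∈ W0 Δ d Pos | ∀ w' ∈ W0 Δ d Pos,
    invSet Pos w' ∩ level Δ d 1 = invSet Pos w ∩ level Δ d 1 →
    invSet Pos w ⊆ invSet Pos w'}

/-- `W⁰_max`: the set of elements `w ∈ W⁰` that are of maximal length in the fiber
`τ⁻¹(N(w) ∩ Δ(1))`, i.e. the maximal elements `w_{I,max}` of all lower ideals `I`. -/
noncomputable def Wmax (Δ : Set V) (d : V → ℤ) (Pos : Set V) : Set (V ≃ₗ[ℝ] V) :=
  {w ∈ W0 Δ d Pos | ∀ w' ∈ W0 Δ d Pos,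
    invSet Pos w' ∩ level Δ d 1 = invSet Pos w ∩ level Δ d 1 →
    invSet Pos w' ⊆ invSet Pos w}

set_option linter.unusedSectionVars false
set_option linter.unusedVariables false

section Aux

variable {V : Type*} [NormedAddCommGroup V] [InnerProductSpace ℝ V] [FiniteDimensional ℝ V]
variable {Δ : Set V} {d : V → ℤ} {Pos : Set V}

lemma inner_self_pos' {x : V} (hx : x ≠ 0) : 0 < ⟪x, x⟫ := by
  rw [real_inner_self_eq_norm_sq]; exact pow_pos (norm_pos_iff.2 hx) 2

lemma sref_apply' (α x : V) (hα : α ≠ 0) : sref α x = x - (2 * ⟪x, α⟫ / ⟪α, α⟫) • α := by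
  have h1 : sref α x = Submodule.reflection ((ℝ ∙ α)ᗮ) x := rfl
  rw [h1, Submodule.reflection_apply, Submodule.starProjection_orthogonal_val,
    Submodule.starProjection_singleton]
  rw [real_inner_self_eq_norm_sq, real_inner_comm x α]
  have hn : ‖α‖ ≠ 0 := norm_ne_zero_iff.2 hα
  have hn2 : ‖α‖ ^ 2 ≠ 0 := pow_ne_zero _ hn
  match_scalars
  · ring
  · simp only [RCLike.ofReal_real_eq_id, id_eq]
    field_simp

lemma sref_symm (α : V) : (sref α).symm = sref α := by
  apply LinearEquiv.ext
  intro x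
  show (Submodule.reflection ((ℝ ∙ α)ᗮ)).symm x = Submodule.reflection ((ℝ ∙ α)ᗮ) x
  rw [Submodule.reflection_symm]

lemma sref_self' (α : V) (hα : α ≠ 0) : sref α α = -α := by
  rw [sref_apply' α α hα]
  have h0 : ⟪α, α⟫ ≠ 0 := ne_of_gt (inner_self_pos' hα)
  rw [show 2 * ⟪α, α⟫ / ⟪α, α⟫ = 2 by field_simp]
  rw [two_smul]; abel

namespace GradedRootSystem

variable (h : GradedRootSystem Δ d Pos)
include h

lemma pos_ne_zero {γ : V} (hγ : γ ∈ Pos) : γ ≠ 0 := h.nonzero γ (h.pos_subset hγ)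

lemma not_neg_mem_pos {γ : V} (hγ : γ ∈ Pos) : -γ ∉ Pos :=
  (h.pos_iff γ (h.pos_subset hγ)).1 hγ

lemma neg_mem_pos {γ : V} (hγΔ : γ ∈ Δ) (hγ : γ ∉ Pos) : -γ ∈ Pos := by
  by_contra hn
  exact hγ ((h.pos_iff γ hγΔ).2 hn)

lemma sref_mem_delta {α x : V} (hα : α ∈ Δ) (hx : x ∈ Δ) : sref α x ∈ Δ := by
  rw [sref_apply' α x (h.nonzero α hα)]
  exact h.reflect_mem α hα x hx

lemma weyl_maps {w : V ≃ₗ[ℝ] V} (hw : w ∈ weyl Δ) :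
    (∀ x ∈ Δ, w x ∈ Δ) ∧ (∀ x ∈ Δ, w.symm x ∈ Δ) := by
  refine Subgroup.closure_induction ?_ ?_ ?_ ?_ hw
  · rintro g ⟨α, hα, rfl⟩
    refine ⟨fun x hx => h.sref_mem_delta hα hx, fun x hx => ?_⟩
    rw [sref_symm]; exact h.sref_mem_delta hα hx
  · exact ⟨fun x hx => hx, fun x hx => hx⟩
  · rintro f g _ _ ⟨hf1, hf2⟩ ⟨hg1, hg2⟩
    exact ⟨fun x hx => hf1 _ (hg1 x hx), fun x hx => hg2 _ (hf2 x hx)⟩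
  · rintro f _ ⟨hf1, hf2⟩
    exact ⟨fun x hx => hf2 x hx, fun x hx => hf1 x hx⟩

lemma root_add {x y : V} (hx : x ∈ Δ) (hy : y ∈ Δ) (hin : ⟪x, y⟫ < 0)
    (hne : x + y ≠ 0) : x + y ∈ Δ := by
  have hx0 := h.nonzero x hx
  have hy0 := h.nonzero y hy
  have hxx := inner_self_pos' hx0
  have hyy := inner_self_pos' hy0
  obtain ⟨n1, hn1⟩ := h.crystallographic y hy x hx
  obtain ⟨n2, hn2⟩ := h.crystallographic x hx y hy
  rw [real_inner_comm x y] at hn2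
  have hn1neg : n1 ≤ -1 := by
    have h1 : (n1 : ℝ) < 0 := by
      rw [hn1]; exact div_neg_of_neg_of_pos (by linarith) hyy
    have : n1 < 0 := by exact_mod_cast h1
    omega
  have hn2neg : n2 ≤ -1 := by
    have h1 : (n2 : ℝ) < 0 := by
      rw [hn2]; exact div_neg_of_neg_of_pos (by linarith) hxx
    have : n2 < 0 := by exact_mod_cast h1
    omega
  rcases eq_or_lt_of_le hn1neg with he1 | hl1
  · have := h.reflect_mem y hy x hx
    rw [← hn1, he1] at this
    push_cast at this
    simpa using this
  rcases eq_or_lt_of_le hn2neg with he2 | hl2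
  · have := h.reflect_mem x hx y hy
    rw [real_inner_comm x y, ← hn2, he2] at this
    push_cast at this
    rw [add_comm]
    simpa using this
  -- both ≤ -2 : contradiction with Cauchy-Schwarz
  exfalso
  have hsq : ⟪x, y⟫ * ⟪x, y⟫ < ⟪x, x⟫ * ⟪y, y⟫ := by
    have hlt : ⟪x, -y⟫ < ‖x‖ * ‖-y‖ := by
      rw [inner_lt_norm_mul_iff_real]
      intro heq
      have hy0' : ‖y‖ ≠ 0 := norm_ne_zero_iff.2 hy0
      have hxc : x = (-(‖x‖ / ‖y‖)) • y := by
        rw [norm_neg] at heq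
        have h0 : ‖y‖ • x = -(‖x‖ • y) := by rw [heq]; rw [smul_neg]
        have h2 : x = -((‖y‖⁻¹ * ‖x‖) • y) := by
          have h3 := congrArg (fun v => (‖y‖)⁻¹ • v) h0
          simpa only [smul_smul, inv_mul_cancel₀ hy0', one_smul, smul_neg] using h3
        refine h2.trans ?_
        rw [neg_smul, div_eq_inv_mul]
      have hmem : (-(‖x‖ / ‖y‖)) • y ∈ Δ := by rw [← hxc]; exact hx
      have := h.reduced y hy _ hmem
      have hxn : ‖x‖ ≠ 0 := norm_ne_zero_iff.2 hx0
      rcases this with h1 | h1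
      · have hp : (0:ℝ) < ‖x‖ / ‖y‖ :=
          div_pos (norm_pos_iff.2 hx0) (norm_pos_iff.2 hy0)
        linarith
      · apply hne
        rw [hxc, h1, neg_one_smul]; abel
    rw [inner_neg_right, norm_neg] at hlt
    have h2 : 0 < -⟪x, y⟫ := by linarith
    have h3 : ⟪x,x⟫ = ‖x‖^2 := real_inner_self_eq_norm_sq x
    have h4 : ⟪y,y⟫ = ‖y‖^2 := real_inner_self_eq_norm_sq y
    nlinarith [norm_nonneg x, norm_nonneg y]
  have hprod : (4:ℝ) ≤ (n1:ℝ) * (n2:ℝ) := by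
    have c1' : n1 ≤ -2 := by omega
    have c2' : n2 ≤ -2 := by omega
    have c1 : (n1:ℝ) ≤ -2 := by exact_mod_cast c1'
    have c2 : (n2:ℝ) ≤ -2 := by exact_mod_cast c2'
    nlinarith
  have hkey : (n1:ℝ) * (n2:ℝ) * (⟪y,y⟫ * ⟪x,x⟫) = 4 * (⟪x,y⟫ * ⟪x,y⟫) := by
    rw [hn1, hn2]; field_simp; ring
  nlinarith

end GradedRootSystem
end Aux
section Aux2
variable {V : Type*} [NormedAddCommGroup V] [InnerProductSpace ℝ V] [FiniteDimensional ℝ V]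
variable {Δ : Set V} {d : V → ℤ} {Pos : Set V}

lemma inner_msum_nonneg (a : V) (s : Multiset V) (hb : ∀ b ∈ s, 0 ≤ ⟪a, b⟫) :
    0 ≤ ⟪a, s.sum⟫ := by
  induction s using Multiset.induction_on with
  | empty => simp
  | cons c t ih =>
    rw [Multiset.sum_cons, inner_add_right]
    have h1 := hb c (Multiset.mem_cons_self c t)
    have ht := ih (fun b hbm => hb b (Multiset.mem_cons_of_mem hbm))
    linarith

/-- The relation `a ≺ b` on positive roots : `b - a` is a positive root. -/
def precR (Pos : Set V) (a b : V) : Prop := a ∈ Pos ∧ b ∈ Pos ∧ b - a ∈ Pos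

/-- The measure used for inductions along `≺`. -/
noncomputable def tgm (Pos : Set V) (x : V) : ℕ :=
  {z | Relation.TransGen (precR Pos) z x}.ncard

lemma tg_mem_pos {a b : V} (htg : Relation.TransGen (precR Pos) a b) :
    a ∈ Pos ∧ b ∈ Pos := by
  induction htg with
  | single hab => exact ⟨hab.1, hab.2.1⟩
  | tail _ hbc ih => exact ⟨ih.1, hbc.2.1⟩

lemma tg_sum {a b : V} (htg : Relation.TransGen (precR Pos) a b) :
    ∃ s : Multiset V, s ≠ 0 ∧ (∀ z ∈ s, z ∈ Pos) ∧ s.sum = b - a := by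
  induction htg with
  | @single b' hab =>
    refine ⟨{b' - a}, by simp, ?_, by simp⟩
    intro z hz
    rw [Multiset.mem_singleton] at hz
    subst hz
    exact hab.2.2
  | @tail b₁ c htg hbc ih =>
    obtain ⟨s, hs0, hsP, hssum⟩ := ih
    refine ⟨(c - b₁) ::ₘ s, Multiset.cons_ne_zero, ?_, ?_⟩
    · intro z hz
      rw [Multiset.mem_cons] at hz
      rcases hz with rfl | hz
      · exact hbc.2.2
      · exact hsP z hz
    · rw [Multiset.sum_cons, hssum]; abel

namespace GradedRootSystem

variable (h : GradedRootSystem Δ d Pos)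
include h

lemma sum_pos_ne_zero : ∀ (n : ℕ) (s : Multiset V), Multiset.card s ≤ n → s ≠ 0 →
    (∀ z ∈ s, z ∈ Pos) → s.sum ≠ 0 := by
  intro n
  induction n with
  | zero =>
    intro s hc hs _
    rw [Nat.le_zero, Multiset.card_eq_zero] at hc
    exact absurd hc hs
  | succ n IH =>
    intro s hc hs hz hsum
    classical
    obtain ⟨a, ha⟩ := Multiset.exists_mem_of_ne_zero hs
    obtain ⟨s', rfl⟩ := Multiset.exists_cons_of_mem ha
    have haP : a ∈ Pos := hz a (Multiset.mem_cons_self a s')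
    rcases eq_or_ne s' 0 with rfl | hs'
    · simp only [Multiset.sum_cons, Multiset.sum_zero, add_zero] at hsum
      exact h.pos_ne_zero haP hsum
    · rw [Multiset.sum_cons] at hsum
      have hsum' : s'.sum = -a := by
        have := hsum
        abel_nf at this ⊢
        linear_combination (norm := abel_nf) this
      have hex : ∃ b ∈ s', ⟪a, b⟫ < 0 := by
        by_contra hno
        push_neg at hno
        have h1 : (0:ℝ) ≤ ⟪a, s'.sum⟫ := inner_msum_nonneg a s' hno
        rw [hsum', inner_neg_right] at h1
        have h2 := inner_self_pos' (h.pos_ne_zero haP)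
        linarith
      obtain ⟨b, hbm, hab⟩ := hex
      have hbP : b ∈ Pos := hz b (Multiset.mem_cons_of_mem hbm)
      have habne : a + b ≠ 0 := by
        intro h0
        have : a = -b := by linear_combination (norm := abel_nf) h0
        exact h.not_neg_mem_pos hbP (this ▸ haP)
      have habΔ : a + b ∈ Δ := h.root_add (h.pos_subset haP) (h.pos_subset hbP) hab habne
      have habP : a + b ∈ Pos := h.pos_add a haP b hbP habΔ
      set t := (a + b) ::ₘ s'.erase b with ht
      have htc : Multiset.card t ≤ n := by
        rw [ht, Multiset.card_cons, Multiset.card_erase_of_mem hbm]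
        rw [Multiset.card_cons] at hc
        have hb1 : 1 ≤ Multiset.card s' := by
          rw [Nat.one_le_iff_ne_zero]
          intro h0
          rw [Multiset.card_eq_zero] at h0
          exact hs' h0
        rw [Nat.pred_eq_sub_one]
        omega
      have htz : ∀ z ∈ t, z ∈ Pos := by
        intro z hzt
        rw [ht, Multiset.mem_cons] at hzt
        rcases hzt with rfl | hzt
        · exact habP
        · exact hz z (Multiset.mem_cons_of_mem (Multiset.mem_of_mem_erase hzt))
      have htsum : t.sum = 0 := by
        rw [ht, Multiset.sum_cons]
        have he : s'.sum = b + (s'.erase b).sum := by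
          conv_lhs => rw [← Multiset.cons_erase hbm]
          rw [Multiset.sum_cons]
        have : (s'.erase b).sum = -a - b := by
          rw [he] at hsum'
          linear_combination (norm := abel_nf) hsum'
        rw [this]; abel
      exact IH t htc (Multiset.cons_ne_zero) htz htsum

lemma tg_irrefl (a : V) : ¬ Relation.TransGen (precR Pos) a a := by
  intro htg
  obtain ⟨s, hs0, hsP, hssum⟩ := tg_sum htg
  exact h.sum_pos_ne_zero (Multiset.card s) s le_rfl hs0 hsP (by rw [hssum]; simp)

lemma tgm_lt {a b : V} (htg : Relation.TransGen (precR Pos) a b) :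
    tgm Pos a < tgm Pos b := by
  have hsub : {z | Relation.TransGen (precR Pos) z a} ⊆
      {z | Relation.TransGen (precR Pos) z b} := fun z hz => hz.trans htg
  have hfin : {z | Relation.TransGen (precR Pos) z b}.Finite :=
    (h.finite.subset h.pos_subset).subset (fun z hz => (tg_mem_pos hz).1)
  apply Set.ncard_lt_ncard _ hfin
  rw [Set.ssubset_def]
  refine ⟨hsub, fun hsup => ?_⟩
  exact h.tg_irrefl a (hsup htg)

lemma d_nonneg_of_pos {γ : V} (hγ : γ ∈ Pos) : 0 ≤ d γ := by
  by_contra hlt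
  push_neg at hlt
  have hγΔ := h.pos_subset hγ
  have h1 : -γ ∈ Δ := h.neg_mem γ hγΔ
  have h2 : 1 ≤ d (-γ) := by rw [h.grade_neg γ hγΔ]; omega
  exact h.not_neg_mem_pos hγ (h.compatible _ h1 h2)

lemma one_le_d_invSet {w : V ≃ₗ[ℝ] V} (hw0 : ∀ γ ∈ pos0 d Pos, w γ ∈ Pos)
    {γ : V} (hγ : γ ∈ invSet Pos w) : 1 ≤ d γ := by
  obtain ⟨hγP, hwγ⟩ := hγ
  have h0 := h.d_nonneg_of_pos hγP
  rcases eq_or_lt_of_le h0 with h1 | h1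
  · exfalso
    have hp0 : γ ∈ pos0 d Pos := ⟨hγP, h1.symm⟩
    exact h.not_neg_mem_pos (hw0 γ hp0) hwγ
  · omega

end GradedRootSystem
end Aux2
section Aux3
variable {V : Type*} [NormedAddCommGroup V] [InnerProductSpace ℝ V] [FiniteDimensional ℝ V]
variable {Δ : Set V} {d : V → ℤ} {Pos : Set V}

namespace GradedRootSystem

variable (h : GradedRootSystem Δ d Pos)
include h

lemma string_step {α β : V} (hα : α ∈ Δ) :
    ∀ n : ℕ, 1 ≤ n → β ∈ Δ → β - (n : ℝ) • α ∈ Δ → β ≠ α → β - α ∈ Δ := by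
  have hα0 := h.nonzero α hα
  have hαα := inner_self_pos' hα0
  intro n
  induction n using Nat.strong_induction_on with
  | _ n IH =>
    intro hn1 hβ hend hne
    have hsubne : β - α ≠ 0 := sub_ne_zero_of_ne hne
    by_cases hin : 0 < ⟪β, α⟫
    · have := h.root_add hβ (h.neg_mem α hα)
        (by rw [inner_neg_right]; linarith)
        (by rw [← sub_eq_add_neg]; exact hsubne)
      rwa [← sub_eq_add_neg] at this
    · push_neg at hin
      rcases eq_or_lt_of_le hn1 with h1 | h2
      · rw [← h1] at hend; simpa using hend
      · set y := β - (n : ℝ) • α with hy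
        have hyΔ : y ∈ Δ := hend
        have hncast : (1:ℝ) ≤ (n:ℝ) := by exact_mod_cast hn1
        have hyin : ⟪y, α⟫ < 0 := by
          rw [hy, inner_sub_left, real_inner_smul_left]
          nlinarith
        have hne0 : y + α ≠ 0 := by
          intro h0
          have hβeq : β = ((n:ℝ) - 1) • α := by
            have h3 : β - (n:ℝ) • α + α = 0 := h0
            rw [sub_smul, one_smul]
            linear_combination (norm := abel_nf) h3
          have hmem : ((n:ℝ) - 1) • α ∈ Δ := by rw [← hβeq]; exact hβ
          rcases h.reduced α hα _ hmem with h4 | h4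
          · apply hne
            rw [hβeq, h4, one_smul]
          · have : (2:ℝ) ≤ (n:ℝ) := by exact_mod_cast h2
            linarith
        have hstep : y + α ∈ Δ := h.root_add hyΔ hα hyin hne0
        have heq : y + α = β - ((n - 1 : ℕ) : ℝ) • α := by
          rw [hy, Nat.cast_sub (by omega), sub_smul, Nat.cast_one, one_smul]
          abel
        rw [heq] at hstep
        exact IH (n - 1) (by omega) (by omega) hβ hstep hne

lemma string_all {α β : V} (hα : α ∈ Δ) (hβ : β ∈ Δ) (n : ℕ)
    (hend : β - (n : ℝ) • α ∈ Δ) (hne : β ≠ α) :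
    ∀ j, j ≤ n → β - (j : ℝ) • α ∈ Δ := by
  have hα0 := h.nonzero α hα
  intro j
  induction j with
  | zero => intro _; simpa using hβ
  | succ j IHj =>
    intro hjn
    have hxj : β - (j : ℝ) • α ∈ Δ := IHj (by omega)
    have hxjne : β - (j : ℝ) • α ≠ α := by
      intro heq
      have hβeq : β = ((j : ℝ) + 1) • α := by
        rw [add_smul, one_smul]
        linear_combination (norm := abel_nf) heq
      have hmem : ((j:ℝ) + 1) • α ∈ Δ := by rw [← hβeq]; exact hβ
      rcases h.reduced α hα _ hmem with h4 | h4
      · have hj0 : (j : ℝ) = 0 := by linarith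
        apply hne
        rw [hβeq, hj0]
        simp
      · have : (0:ℝ) ≤ (j:ℝ) := Nat.cast_nonneg j
        linarith
    have hstep : (β - (j : ℝ) • α) - ((n - j : ℕ) : ℝ) • α ∈ Δ := by
      have heq2 : (β - (j : ℝ) • α) - ((n - j : ℕ) : ℝ) • α = β - (n : ℝ) • α := by
        rw [Nat.cast_sub (by omega), sub_smul]
        abel
      rw [heq2]; exact hend
    have hres := h.string_step hα (n - j) (by omega) hxj hstep hxjne
    have heq3 : (β - (j : ℝ) • α) - α = β - ((j + 1 : ℕ) : ℝ) • α := by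
      push_cast
      rw [add_smul, one_smul]
      abel
    rwa [heq3] at hres

lemma sref_pos {α β : V} (hαs : α ∈ simpleRoots Pos) (hβ : β ∈ Pos) (hne : β ≠ α) :
    sref α β ∈ Pos := by
  classical
  have hαP : α ∈ Pos := hαs.1
  have hαΔ : α ∈ Δ := h.pos_subset hαP
  have hβΔ : β ∈ Δ := h.pos_subset hβ
  have hα0 := h.nonzero α hαΔ
  obtain ⟨n, hn⟩ := h.crystallographic α hαΔ β hβΔ
  have hsrefeq : sref α β = β - (n : ℝ) • α := by rw [sref_apply' α β hα0, hn]
  have hsΔ : sref α β ∈ Δ := h.sref_mem_delta hαΔ hβΔ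
  by_contra hnot
  rcases lt_trichotomy n 0 with hneg | hzero | hposn
  · -- n < 0 : chain β + j • α
    set m := (-n).toNat with hm
    have hmcast : ((m : ℕ) : ℝ) = -(n : ℝ) := by
      have h5 : (((-n).toNat : ℤ) : ℤ) = -n := Int.toNat_of_nonneg (by omega)
      rw [hm]
      exact_mod_cast congrArg (fun z : ℤ => (z : ℝ)) h5
    have hm1 : 1 ≤ m := by omega
    have hβne' : β ≠ -α := by
      intro he
      exact h.not_neg_mem_pos hαP (he ▸ hβ)
    have hendeq : β - (m : ℝ) • (-α) = β - (n : ℝ) • α := by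
      rw [hmcast, smul_neg, neg_smul]
      abel
    have hall : ∀ j, j ≤ m → β - (j : ℝ) • (-α) ∈ Δ := by
      apply h.string_all (h.neg_mem α hαΔ) hβΔ m (by rw [hendeq, ← hsrefeq]; exact hsΔ) hβne'
    have hex : ∃ k : ℕ, β - (k : ℝ) • (-α) ∉ Pos := ⟨m, by rw [hendeq, ← hsrefeq]; exact hnot⟩
    set k := Nat.find hex with hk
    have hkspec : β - (k : ℝ) • (-α) ∉ Pos := Nat.find_spec hex
    have hkle : k ≤ m := Nat.find_min' hex (by rw [hendeq, ← hsrefeq]; exact hnot)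
    have hk0 : k ≠ 0 := by
      intro h0
      apply hkspec
      rw [h0]
      simpa using hβ
    have hjP : β - ((k - 1 : ℕ) : ℝ) • (-α) ∈ Pos := by
      by_contra hc
      exact absurd (Nat.find_min' hex hc) (by omega)
    have hkΔ : β - (k : ℝ) • (-α) ∈ Δ := hall k hkle
    have hknP : -(β - (k : ℝ) • (-α)) ∈ Pos := h.neg_mem_pos hkΔ hkspec
    have hsumeq : (β - ((k - 1 : ℕ) : ℝ) • (-α)) + -(β - (k : ℝ) • (-α)) = -α := by
      rw [Nat.cast_sub (by omega), sub_smul, Nat.cast_one, one_smul]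
      abel
    have hnegαP : -α ∈ Pos := by
      rw [← hsumeq]
      exact h.pos_add _ hjP _ hknP (by rw [hsumeq]; exact h.neg_mem α hαΔ)
    exact h.not_neg_mem_pos hαP hnegαP
  · apply hnot
    rw [hsrefeq, hzero]
    simpa using hβ
  · -- n > 0 : chain β - j • α
    set m := n.toNat with hm
    have hmcast : ((m : ℕ) : ℝ) = (n : ℝ) := by
      have h5 : ((n.toNat : ℤ) : ℤ) = n := Int.toNat_of_nonneg (by omega)
      rw [hm]
      exact_mod_cast congrArg (fun z : ℤ => (z : ℝ)) h5
    have hm1 : 1 ≤ m := by omega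
    have hendeq : β - (m : ℝ) • α = β - (n : ℝ) • α := by rw [hmcast]
    have hall : ∀ j, j ≤ m → β - (j : ℝ) • α ∈ Δ := by
      apply h.string_all hαΔ hβΔ m (by rw [hendeq, ← hsrefeq]; exact hsΔ) hne
    have hex : ∃ k : ℕ, β - (k : ℝ) • α ∉ Pos := ⟨m, by rw [hendeq, ← hsrefeq]; exact hnot⟩
    set k := Nat.find hex with hk
    have hkspec : β - (k : ℝ) • α ∉ Pos := Nat.find_spec hex
    have hkle : k ≤ m := Nat.find_min' hex (by rw [hendeq, ← hsrefeq]; exact hnot)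
    have hk0 : k ≠ 0 := by
      intro h0
      apply hkspec
      rw [h0]
      simpa using hβ
    have hjP : β - ((k - 1 : ℕ) : ℝ) • α ∈ Pos := by
      by_contra hc
      exact absurd (Nat.find_min' hex hc) (by omega)
    have hkΔ : β - (k : ℝ) • α ∈ Δ := hall k hkle
    have hknP : -(β - (k : ℝ) • α) ∈ Pos := h.neg_mem_pos hkΔ hkspec
    have hsumeq : α = (β - ((k - 1 : ℕ) : ℝ) • α) + -(β - (k : ℝ) • α) := by
      rw [Nat.cast_sub (by omega), sub_smul, Nat.cast_one, one_smul]
      abel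
    exact hαs.2 ⟨_, hjP, _, hknP, hsumeq⟩

lemma pair_root {x p q : V} (hx : x ∈ Pos) (hp : p ∈ Pos) (hq : q ∈ Pos)
    (hpq : p + q ∈ Δ) (hξ : x + (p + q) ∈ Δ) : x + p ∈ Δ ∨ x + q ∈ Δ := by
  have hxΔ := h.pos_subset hx
  have hpΔ := h.pos_subset hp
  have hqΔ := h.pos_subset hq
  have hxp0 : x + p ≠ 0 := by
    intro h0
    have : p = -x := by linear_combination (norm := abel_nf) h0
    exact h.not_neg_mem_pos hx (this ▸ hp)
  have hxq0 : x + q ≠ 0 := by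
    intro h0
    have : q = -x := by linear_combination (norm := abel_nf) h0
    exact h.not_neg_mem_pos hx (this ▸ hq)
  by_cases h1 : ⟪x, p⟫ < 0
  · exact Or.inl (h.root_add hxΔ hpΔ h1 hxp0)
  by_cases h2 : ⟪x, q⟫ < 0
  · exact Or.inr (h.root_add hxΔ hqΔ h2 hxq0)
  push_neg at h1 h2
  have hy0 : p + q ≠ 0 := h.nonzero _ hpq
  have hyy : 0 < ⟪p + q, p + q⟫ := inner_self_pos' hy0
  have hsplit : 0 < ⟪x + (p + q), p⟫ ∨ 0 < ⟪x + (p + q), q⟫ := by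
    by_contra hc
    push_neg at hc
    have e1 : ⟪x + (p + q), p⟫ + ⟪x + (p + q), q⟫ = ⟪x, p⟫ + ⟪x, q⟫ + ⟪p + q, p + q⟫ := by
      simp only [inner_add_left, inner_add_right]
      ring
    have := hc.1
    have := hc.2
    linarith
  rcases hsplit with h3 | h3
  · refine Or.inr ?_
    have hres := h.root_add hξ (h.neg_mem p hpΔ)
      (by rw [inner_neg_right]; linarith)
      (by intro h0; apply hxq0; linear_combination (norm := abel_nf) h0)
    have heq : x + (p + q) + -p = x + q := by abel
    rwa [heq] at hres
  · refine Or.inl ?_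
    have hres := h.root_add hξ (h.neg_mem q hqΔ)
      (by rw [inner_neg_right]; linarith)
      (by intro h0; apply hxp0; linear_combination (norm := abel_nf) h0)
    have heq : x + (p + q) + -q = x + p := by abel
    rwa [heq] at hres

end GradedRootSystem
end Aux3
section Aux4
variable {V : Type*} [NormedAddCommGroup V] [InnerProductSpace ℝ V] [FiniteDimensional ℝ V]
variable {Δ : Set V} {d : V → ℤ} {Pos : Set V}

namespace GradedRootSystem

variable (h : GradedRootSystem Δ d Pos)
include h

/-- The core decomposition lemma: if `f` maps roots to roots, `f` of every simple root has
level at most 1, and `ξ` is a positive root with `f ξ` positive of level at least 2, then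
`ξ = x + y` with `x, y, f x, f y` all positive. -/
lemma core {ι : Type*} {B : Module.Basis ι ℝ V} (hB' : simpleRoots Pos ⊆ Set.range B)
    (f : V →ₗ[ℝ] V) (hf : ∀ x ∈ Δ, f x ∈ Δ) (hc : ∀ i, d (f (B i)) ≤ 1) :
    ∀ ξ, ξ ∈ Pos → f ξ ∈ Pos → 2 ≤ d (f ξ) →
      ∃ x y, (x ∈ Pos ∧ f x ∈ Pos) ∧ (y ∈ Pos ∧ f y ∈ Pos) ∧ ξ = x + y := by
  suffices hQ : ∀ (n : ℕ) (ξ : V), tgm Pos ξ ≤ n → ξ ∈ Pos → f ξ ∈ Pos → 2 ≤ d (f ξ) →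
      ∃ x y, (x ∈ Pos ∧ f x ∈ Pos) ∧ (y ∈ Pos ∧ f y ∈ Pos) ∧ ξ = x + y by
    intro ξ
    exact hQ (tgm Pos ξ) ξ le_rfl
  intro n
  induction n using Nat.strong_induction_on with
  | _ n IHout =>
  intro ξ hξn hξP hfξP hd2
  have hξΔ : ξ ∈ Δ := h.pos_subset hξP
  have hfξΔ : f ξ ∈ Δ := hf ξ hξΔ
  -- ξ is not simple
  have hnr : ξ ∉ Set.range B := by
    rintro ⟨i, rfl⟩
    have := hc i
    omega
  have hdecomp : ∃ a ∈ Pos, ∃ b ∈ Pos, ξ = a + b := by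
    by_contra hno
    exact hnr (hB' ⟨hξP, hno⟩)
  obtain ⟨a, haP, b, hbP, hab⟩ := hdecomp
  -- the inner induction : ξ = x + y with x bad (f x ∉ Pos) and y good
  have key : ∀ (m : ℕ) (y x : V), tgm Pos y ≤ m → Relation.TransGen (precR Pos) y ξ →
      y ∈ Pos → f y ∈ Pos → x ∈ Pos → f x ∉ Pos → ξ = x + y →
      ∃ x' y', (x' ∈ Pos ∧ f x' ∈ Pos) ∧ (y' ∈ Pos ∧ f y' ∈ Pos) ∧ ξ = x' + y' := by
    intro m
    induction m using Nat.strong_induction_on with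
    | _ m IHin =>
    intro y x hym htg hyP hfyP hxP hfxP hsum
    have hxΔ := h.pos_subset hxP
    have hyΔ := h.pos_subset hyP
    have hfxΔ : f x ∈ Δ := hf x hxΔ
    have hfyΔ : f y ∈ Δ := hf y hyΔ
    have hnfx : -(f x) ∈ Pos := h.neg_mem_pos hfxΔ hfxP
    have hfsum : f ξ = f x + f y := by rw [hsum, map_add]
    have hfyd : 2 ≤ d (f y) := by
      have hadd : d (f x + f y) = d (f x) + d (f y) :=
        h.grade_add _ hfxΔ _ hfyΔ (by rw [← hfsum]; exact hfξΔ)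
      have hdx : d (f x) ≤ 0 := by
        have h1 := h.d_nonneg_of_pos hnfx
        have h2 := h.grade_neg (f x) hfxΔ
        omega
      rw [hfsum] at hd2
      omega
    -- decompose y using the outer induction hypothesis
    have hylt : tgm Pos y < n := lt_of_lt_of_le (h.tgm_lt htg) hξn
    obtain ⟨p, q, ⟨hpP, hfpP⟩, ⟨hqP, hfqP⟩, hydec⟩ :=
      IHout (tgm Pos y) hylt y le_rfl hyP hfyP hfyd
    have hpqΔ : p + q ∈ Δ := by rw [← hydec]; exact hyΔ
    have hxpq : x + (p + q) ∈ Δ := by rw [← hydec, ← hsum]; exact hξΔ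
    have hdisj := h.pair_root hxP hpP hqP hpqΔ hxpq
    -- finishing move, symmetric in p and q
    have fin : ∀ p' q' : V, p' ∈ Pos → f p' ∈ Pos → q' ∈ Pos → f q' ∈ Pos →
        y = p' + q' → x + p' ∈ Δ →
        ∃ x' y', (x' ∈ Pos ∧ f x' ∈ Pos) ∧ (y' ∈ Pos ∧ f y' ∈ Pos) ∧ ξ = x' + y' := by
      intro p' q' hp'P hfp'P hq'P hfq'P hy' hxp'
      have hxp'P : x + p' ∈ Pos := h.pos_add x hxP p' hp'P hxp'
      by_cases hgood : f (x + p') ∈ Pos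
      · exact ⟨x + p', q', ⟨hxp'P, hgood⟩, ⟨hq'P, hfq'P⟩, by rw [hsum, hy']; abel⟩
      · have hprec : precR Pos q' y := ⟨hq'P, hyP, by rw [hy']; simpa using hp'P⟩
        have htgq : Relation.TransGen (precR Pos) q' ξ :=
          (Relation.TransGen.single hprec).trans htg
        have hqlt : tgm Pos q' < m :=
          lt_of_lt_of_le (h.tgm_lt (Relation.TransGen.single hprec)) hym
        exact IHin (tgm Pos q') hqlt q' (x + p') le_rfl htgq hq'P hfq'P hxp'P hgood
          (by rw [hsum, hy']; abel)
    rcases hdisj with hxpΔ | hxqΔ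
    · exact fin p q hpP hfpP hqP hfqP hydec hxpΔ
    · exact fin q p hqP hfqP hpP hfpP (by rw [hydec, add_comm]) hxqΔ
  -- main case split
  by_cases hfa : f a ∈ Pos
  · by_cases hfb : f b ∈ Pos
    · exact ⟨a, b, ⟨haP, hfa⟩, ⟨hbP, hfb⟩, hab⟩
    · -- b is bad, a is good : ξ = b + a
      have hpreca : precR Pos a ξ := ⟨haP, hξP, by rw [hab]; simpa using hbP⟩
      exact key (tgm Pos a) a b le_rfl (Relation.TransGen.single hpreca) haP hfa hbP hfb
        (by rw [hab, add_comm])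
  · -- a is bad : b is automatically good
    have haΔ := h.pos_subset haP
    have hbΔ := h.pos_subset hbP
    have hfaΔ : f a ∈ Δ := hf a haΔ
    have hfbΔ : f b ∈ Δ := hf b hbΔ
    have hnfa : -(f a) ∈ Pos := h.neg_mem_pos hfaΔ hfa
    have hfb : f b ∈ Pos := by
      have he : f b = f ξ + -(f a) := by rw [hab, map_add]; abel
      rw [he]
      exact h.pos_add _ hfξP _ hnfa (by rw [← he]; exact hfbΔ)
    have hprecb : precR Pos b ξ := ⟨hbP, hξP, by rw [hab]; simpa using haP⟩
    exact key (tgm Pos b) b a le_rfl (Relation.TransGen.single hprecb) hbP hfb haP hfa hab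

end GradedRootSystem
end Aux4
section Aux5
variable {V : Type*} [NormedAddCommGroup V] [InnerProductSpace ℝ V] [FiniteDimensional ℝ V]
variable {Δ : Set V} {d : V → ℤ} {Pos : Set V}

namespace GradedRootSystem

variable (h : GradedRootSystem Δ d Pos)
include h

lemma min_char {ι : Type*} (B : Module.Basis ι ℝ V) (hB : ∀ i, B i ∈ simpleRoots Pos)
    (hB' : simpleRoots Pos ⊆ Set.range B) :
    Wmin Δ d Pos = {w ∈ W0 Δ d Pos | ∀ i, -1 ≤ d (w.symm (B i))} := by
  ext w
  constructor
  · rintro ⟨hw0, hmin⟩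
    refine ⟨hw0, ?_⟩
    intro i
    by_contra hlt
    push_neg at hlt
    set α := B i with hα
    have hαs := hB i
    have hαP : α ∈ Pos := hαs.1
    have hαΔ : α ∈ Δ := h.pos_subset hαP
    have hα0 : α ≠ 0 := h.nonzero α hαΔ
    have hwΔ := (h.weyl_maps hw0.1).1
    have hwsΔ := (h.weyl_maps hw0.1).2
    have hwsαΔ : w.symm α ∈ Δ := hwsΔ α hαΔ
    set γ := -(w.symm α) with hγ
    have hγΔ : γ ∈ Δ := h.neg_mem _ hwsαΔ
    have hdγ : 2 ≤ d γ := by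
      rw [hγ, h.grade_neg _ hwsαΔ]; omega
    have hγP : γ ∈ Pos := h.compatible γ hγΔ (by omega)
    have hwγ : w γ = -α := by rw [hγ, map_neg, LinearEquiv.apply_symm_apply]
    have hγN : γ ∈ invSet Pos w := ⟨hγP, by rw [hwγ, neg_neg]; exact hαP⟩
    set w' : V ≃ₗ[ℝ] V := sref α * w with hw'
    have hw'app : ∀ v, w' v = sref α (w v) := fun v => rfl
    have hw'W : w' ∈ weyl Δ :=
      mul_mem (Subgroup.subset_closure ⟨α, hαΔ, rfl⟩) hw0.1
    have hw'0 : w' ∈ W0 Δ d Pos := by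
      refine ⟨hw'W, ?_⟩
      intro γ' hγ'
      rw [hw'app]
      have hwγ'P : w γ' ∈ Pos := hw0.2 γ' hγ'
      have hwγ'ne : w γ' ≠ α := by
        intro he
        have h2 : γ' = w.symm α := by rw [← he, LinearEquiv.symm_apply_apply]
        have hd0 : d γ' = 0 := hγ'.2
        rw [h2] at hd0
        omega
      exact h.sref_pos hαs hwγ'P hwγ'ne
    have heq : invSet Pos w' ∩ level Δ d 1 = invSet Pos w ∩ level Δ d 1 := by
      ext μ
      constructor
      · rintro ⟨⟨hμP, hμ'⟩, hlvl⟩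
        refine ⟨⟨hμP, ?_⟩, hlvl⟩
        by_contra hnN
        have hwμΔ : w μ ∈ Δ := hwΔ μ (h.pos_subset hμP)
        have hwμP : w μ ∈ Pos := by
          by_contra hc
          exact hnN (h.neg_mem_pos hwμΔ hc)
        have hwμne : w μ ≠ α := by
          intro he
          have h2 : μ = w.symm α := by rw [← he, LinearEquiv.symm_apply_apply]
          apply h.not_neg_mem_pos hγP
          rw [hγ, neg_neg, ← h2]; exact hμP
        have h3 := h.sref_pos hαs hwμP hwμne
        rw [← hw'app] at h3
        exact h.not_neg_mem_pos h3 hμ'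
      · rintro ⟨⟨hμP, hμ'⟩, hlvl⟩
        refine ⟨⟨hμP, ?_⟩, hlvl⟩
        have hνP : -(w μ) ∈ Pos := hμ'
        have hνne : -(w μ) ≠ α := by
          intro he
          have h1 : w μ = -α := by rw [← neg_neg (w μ), he]
          have h2 : μ = w.symm (-α) := by rw [← h1, LinearEquiv.symm_apply_apply]
          have hμγ : μ = γ := by rw [h2, map_neg, hγ]
          have hd1 : d μ = 1 := hlvl.2
          rw [hμγ] at hd1
          omega
        have h3 := h.sref_pos hαs hνP hνne
        have hgoal : -(w' μ) = sref α (-(w μ)) := by rw [hw'app, map_neg]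
        rw [hgoal]; exact h3
    have hsub := hmin w' hw'0 heq
    have hγN' := hsub hγN
    have he1 : w' γ = α := by
      rw [hw'app, hwγ, map_neg, sref_self' α hα0, neg_neg]
    apply h.not_neg_mem_pos hαP
    have := hγN'.2
    rwa [he1] at this
  · rintro ⟨hw0, hk⟩
    refine ⟨hw0, ?_⟩
    intro w' hw'0 heq
    have hwΔ := (h.weyl_maps hw0.1).1
    have hwsΔ := (h.weyl_maps hw0.1).2
    have hw'Δ := (h.weyl_maps hw'0.1).1
    set f : V →ₗ[ℝ] V := -(w.symm : V →ₗ[ℝ] V) with hf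
    have hfapp : ∀ v, f v = -(w.symm v) := fun v => rfl
    have hfΔ : ∀ x ∈ Δ, f x ∈ Δ := fun x hx => by
      rw [hfapp]; exact h.neg_mem _ (hwsΔ x hx)
    have hfc : ∀ i, d (f (B i)) ≤ 1 := by
      intro i
      have hBiΔ : B i ∈ Δ := h.pos_subset (hB i).1
      have h2 := hk i
      rw [hfapp, h.grade_neg _ (hwsΔ _ hBiΔ)]
      omega
    have main : ∀ (n : ℕ) (γ : V), tgm Pos γ ≤ n → γ ∈ invSet Pos w →
        γ ∈ invSet Pos w' := by
      intro n
      induction n using Nat.strong_induction_on with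
      | _ n IH =>
      intro γ hγn hγN
      have hγP : γ ∈ Pos := hγN.1
      have hγΔ : γ ∈ Δ := h.pos_subset hγP
      have hd1 : 1 ≤ d γ := h.one_le_d_invSet hw0.2 hγN
      rcases eq_or_lt_of_le hd1 with hd1' | hd2
      · have hmem : γ ∈ invSet Pos w ∩ level Δ d 1 := ⟨hγN, ⟨hγΔ, hd1'.symm⟩⟩
        rw [← heq] at hmem
        exact hmem.1
      · have hξP : -(w γ) ∈ Pos := hγN.2
        have hfξ : f (-(w γ)) = γ := by
          rw [hfapp, map_neg, neg_neg, LinearEquiv.symm_apply_apply]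
        obtain ⟨x, y, ⟨hxP, hfxP⟩, ⟨hyP, hfyP⟩, hxy⟩ :=
          h.core hB' f hfΔ hfc (-(w γ)) hξP (by rw [hfξ]; exact hγP) (by rw [hfξ]; omega)
        have hγeq : γ = f x + f y := by rw [← hfξ, hxy, map_add]
        have hμN : f x ∈ invSet Pos w := by
          refine ⟨hfxP, ?_⟩
          have he : w (f x) = -x := by rw [hfapp, map_neg, LinearEquiv.apply_symm_apply]
          rw [he, neg_neg]; exact hxP
        have hνN : f y ∈ invSet Pos w := by
          refine ⟨hfyP, ?_⟩
          have he : w (f y) = -y := by rw [hfapp, map_neg, LinearEquiv.apply_symm_apply]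
          rw [he, neg_neg]; exact hyP
        have hprecx : precR Pos (f x) γ := ⟨hfxP, hγP, by rw [hγeq]; simpa using hfyP⟩
        have hprecy : precR Pos (f y) γ := ⟨hfyP, hγP, by rw [hγeq]; simpa using hfxP⟩
        have h1 := IH (tgm Pos (f x))
          (lt_of_lt_of_le (h.tgm_lt (Relation.TransGen.single hprecx)) hγn) _ le_rfl hμN
        have h2 := IH (tgm Pos (f y))
          (lt_of_lt_of_le (h.tgm_lt (Relation.TransGen.single hprecy)) hγn) _ le_rfl hνN
        refine ⟨hγP, ?_⟩
        have hsum : -(w' γ) = -(w' (f x)) + -(w' (f y)) := by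
          rw [hγeq, map_add]; abel
        rw [hsum]
        have hw'γΔ : -(w' γ) ∈ Δ := h.neg_mem _ (hw'Δ γ hγΔ)
        rw [hsum] at hw'γΔ
        exact h.pos_add _ h1.2 _ h2.2 hw'γΔ
    intro γ hγ
    exact main (tgm Pos γ) γ le_rfl hγ

lemma max_char {ι : Type*} (B : Module.Basis ι ℝ V) (hB : ∀ i, B i ∈ simpleRoots Pos)
    (hB' : simpleRoots Pos ⊆ Set.range B) :
    Wmax Δ d Pos = {w ∈ W0 Δ d Pos | ∀ i, d (w.symm (B i)) ≤ 1} := by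
  ext w
  constructor
  · rintro ⟨hw0, hmax⟩
    refine ⟨hw0, ?_⟩
    intro i
    by_contra hlt
    push_neg at hlt
    set α := B i with hα
    have hαs := hB i
    have hαP : α ∈ Pos := hαs.1
    have hαΔ : α ∈ Δ := h.pos_subset hαP
    have hα0 : α ≠ 0 := h.nonzero α hαΔ
    have hwΔ := (h.weyl_maps hw0.1).1
    have hwsΔ := (h.weyl_maps hw0.1).2
    have hwsαΔ : w.symm α ∈ Δ := hwsΔ α hαΔ
    set γ := w.symm α with hγ
    have hγΔ : γ ∈ Δ := hwsαΔ
    have hdγ : 2 ≤ d γ := by omega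
    have hγP : γ ∈ Pos := h.compatible γ hγΔ (by omega)
    have hwγ : w γ = α := by rw [hγ, LinearEquiv.apply_symm_apply]
    have hγnN : γ ∉ invSet Pos w := by
      intro hc
      apply h.not_neg_mem_pos hαP
      have := hc.2
      rwa [hwγ] at this
    set w' : V ≃ₗ[ℝ] V := sref α * w with hw'
    have hw'app : ∀ v, w' v = sref α (w v) := fun v => rfl
    have hw'W : w' ∈ weyl Δ :=
      mul_mem (Subgroup.subset_closure ⟨α, hαΔ, rfl⟩) hw0.1
    have hw'0 : w' ∈ W0 Δ d Pos := by
      refine ⟨hw'W, ?_⟩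
      intro γ' hγ'
      rw [hw'app]
      have hwγ'P : w γ' ∈ Pos := hw0.2 γ' hγ'
      have hwγ'ne : w γ' ≠ α := by
        intro he
        have h2 : γ' = w.symm α := by rw [← he, LinearEquiv.symm_apply_apply]
        have hd0 : d γ' = 0 := hγ'.2
        rw [h2, ← hγ] at hd0
        omega
      exact h.sref_pos hαs hwγ'P hwγ'ne
    have heq : invSet Pos w' ∩ level Δ d 1 = invSet Pos w ∩ level Δ d 1 := by
      ext μ
      constructor
      · rintro ⟨⟨hμP, hμ'⟩, hlvl⟩
        refine ⟨⟨hμP, ?_⟩, hlvl⟩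
        by_contra hnN
        have hwμΔ : w μ ∈ Δ := hwΔ μ (h.pos_subset hμP)
        have hwμP : w μ ∈ Pos := by
          by_contra hc
          exact hnN (h.neg_mem_pos hwμΔ hc)
        have hwμne : w μ ≠ α := by
          intro he
          have h2 : μ = w.symm α := by rw [← he, LinearEquiv.symm_apply_apply]
          have hd1 : d μ = 1 := hlvl.2
          rw [h2, ← hγ] at hd1
          omega
        have h3 := h.sref_pos hαs hwμP hwμne
        rw [← hw'app] at h3
        exact h.not_neg_mem_pos h3 hμ'
      · rintro ⟨⟨hμP, hμ'⟩, hlvl⟩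
        refine ⟨⟨hμP, ?_⟩, hlvl⟩
        have hνP : -(w μ) ∈ Pos := hμ'
        have hνne : -(w μ) ≠ α := by
          intro he
          have h1 : w μ = -α := by rw [← neg_neg (w μ), he]
          have h2 : μ = w.symm (-α) := by rw [← h1, LinearEquiv.symm_apply_apply]
          have hμγ : μ = -γ := by rw [h2, map_neg, hγ]
          apply h.not_neg_mem_pos hγP
          rw [← hμγ]; exact hμP
        have h3 := h.sref_pos hαs hνP hνne
        have hgoal : -(w' μ) = sref α (-(w μ)) := by rw [hw'app, map_neg]
        rw [hgoal]; exact h3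
    have hsub := hmax w' hw'0 heq
    have hγN' : γ ∈ invSet Pos w' := by
      refine ⟨hγP, ?_⟩
      have he1 : w' γ = -α := by
        rw [hw'app, hwγ, sref_self' α hα0]
      rw [he1, neg_neg]; exact hαP
    exact hγnN (hsub hγN')
  · rintro ⟨hw0, hk⟩
    refine ⟨hw0, ?_⟩
    intro w' hw'0 heq
    have hwΔ := (h.weyl_maps hw0.1).1
    have hwsΔ := (h.weyl_maps hw0.1).2
    have hw'Δ := (h.weyl_maps hw'0.1).1
    set f : V →ₗ[ℝ] V := (w.symm : V →ₗ[ℝ] V) with hf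
    have hfapp : ∀ v, f v = w.symm v := fun v => rfl
    have hfΔ : ∀ x ∈ Δ, f x ∈ Δ := fun x hx => hwsΔ x hx
    have hfc : ∀ i, d (f (B i)) ≤ 1 := fun i => hk i
    have main : ∀ (n : ℕ) (γ : V), tgm Pos γ ≤ n → γ ∈ invSet Pos w' →
        γ ∈ invSet Pos w := by
      intro n
      induction n using Nat.strong_induction_on with
      | _ n IH =>
      intro γ hγn hγN'
      have hγP : γ ∈ Pos := hγN'.1
      have hγΔ : γ ∈ Δ := h.pos_subset hγP
      have hd1 : 1 ≤ d γ := h.one_le_d_invSet hw'0.2 hγN'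
      rcases eq_or_lt_of_le hd1 with hd1' | hd2
      · have hmem : γ ∈ invSet Pos w' ∩ level Δ d 1 := ⟨hγN', ⟨hγΔ, hd1'.symm⟩⟩
        rw [heq] at hmem
        exact hmem.1
      · by_contra hγnN
        have hwγΔ : w γ ∈ Δ := hwΔ γ hγΔ
        have hwγP : w γ ∈ Pos := by
          by_contra hc
          exact hγnN ⟨hγP, h.neg_mem_pos hwγΔ hc⟩
        have hfξ : f (w γ) = γ := by rw [hfapp, LinearEquiv.symm_apply_apply]
        obtain ⟨x, y, ⟨hxP, hfxP⟩, ⟨hyP, hfyP⟩, hxy⟩ :=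
          h.core hB' f hfΔ hfc (w γ) hwγP (by rw [hfξ]; exact hγP) (by rw [hfξ]; omega)
        have hγeq : γ = f x + f y := by rw [← hfξ, hxy, map_add]
        have hμnN : f x ∉ invSet Pos w := by
          intro hc
          apply h.not_neg_mem_pos hxP
          have he : w (f x) = x := by rw [hfapp, LinearEquiv.apply_symm_apply]
          have := hc.2
          rwa [he] at this
        have hνnN : f y ∉ invSet Pos w := by
          intro hc
          apply h.not_neg_mem_pos hyP
          have he : w (f y) = y := by rw [hfapp, LinearEquiv.apply_symm_apply]
          have := hc.2
          rwa [he] at this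
        have hprecx : precR Pos (f x) γ := ⟨hfxP, hγP, by rw [hγeq]; simpa using hfyP⟩
        have hprecy : precR Pos (f y) γ := ⟨hfyP, hγP, by rw [hγeq]; simpa using hfxP⟩
        have h1 : f x ∉ invSet Pos w' := fun hc => hμnN
          (IH (tgm Pos (f x))
            (lt_of_lt_of_le (h.tgm_lt (Relation.TransGen.single hprecx)) hγn) _ le_rfl hc)
        have h2 : f y ∉ invSet Pos w' := fun hc => hνnN
          (IH (tgm Pos (f y))
            (lt_of_lt_of_le (h.tgm_lt (Relation.TransGen.single hprecy)) hγn) _ le_rfl hc)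
        -- w' γ is then positive, contradicting γ ∈ invSet w'
        have hfxΔ : f x ∈ Δ := hfΔ x (h.pos_subset hxP)
        have hfyΔ : f y ∈ Δ := hfΔ y (h.pos_subset hyP)
        have hw'x : w' (f x) ∈ Pos := by
          by_contra hc
          exact h1 ⟨hfxP, h.neg_mem_pos (hw'Δ _ hfxΔ) hc⟩
        have hw'y : w' (f y) ∈ Pos := by
          by_contra hc
          exact h2 ⟨hfyP, h.neg_mem_pos (hw'Δ _ hfyΔ) hc⟩
        have hsum : w' γ = w' (f x) + w' (f y) := by rw [hγeq, map_add]
        have hw'γP : w' γ ∈ Pos := by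
          rw [hsum]
          exact h.pos_add _ hw'x _ hw'y (by rw [← hsum]; exact hw'Δ γ hγΔ)
        exact h.not_neg_mem_pos hw'γP hγN'.2
    intro γ hγ
    exact main (tgm Pos γ) γ le_rfl hγ

end GradedRootSystem
end Aux5
section Aux6
variable {V : Type*} [NormedAddCommGroup V] [InnerProductSpace ℝ V] [FiniteDimensional ℝ V]
variable {Δ : Set V} {d : V → ℤ} {Pos : Set V}

namespace GradedRootSystem

variable (h : GradedRootSystem Δ d Pos)
include h

lemma invSet_subset_level1 (hlev : ∀ γ ∈ Δ, d γ = -1 ∨ d γ = 0 ∨ d γ = 1)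
    {w : V ≃ₗ[ℝ] V} (hw0 : w ∈ W0 Δ d Pos) : invSet Pos w ⊆ level Δ d 1 := by
  intro γ hγ
  have h1 := h.one_le_d_invSet hw0.2 hγ
  have h2 := hlev γ (h.pos_subset hγ.1)
  exact ⟨h.pos_subset hγ.1, by omega⟩

lemma minuscule_eq (hlev : ∀ γ ∈ Δ, d γ = -1 ∨ d γ = 0 ∨ d γ = 1) :
    Wmin Δ d Pos = W0 Δ d Pos ∧ Wmax Δ d Pos = W0 Δ d Pos := by
  constructor
  · ext w
    constructor
    · exact fun hw => hw.1
    · intro hw0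
      refine ⟨hw0, ?_⟩
      intro w' hw' heq γ hγ
      have hmem : γ ∈ invSet Pos w ∩ level Δ d 1 :=
        ⟨hγ, h.invSet_subset_level1 hlev hw0 hγ⟩
      rw [← heq] at hmem
      exact hmem.1
  · ext w
    constructor
    · exact fun hw => hw.1
    · intro hw0
      refine ⟨hw0, ?_⟩
      intro w' hw' heq γ hγ
      have hmem : γ ∈ invSet Pos w' ∩ level Δ d 1 :=
        ⟨hγ, h.invSet_subset_level1 hlev hw' hγ⟩
      rw [heq] at hmem
      exact hmem.1

lemma minuscule_level {ι : Type*} [Fintype ι] [DecidableEq ι] (B : Module.Basis ι ℝ V)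
    (ϖ : ι → V) (hϖ : ∀ i j, ⟪B i, ϖ j⟫ = if i = j then 1 else 0) (i₀ : ι)
    (hstd : ∀ γ ∈ Δ, (d γ : ℝ) = B.repr γ i₀)
    (hms : ∀ γ ∈ Δ, ⟪ϖ i₀, γ⟫ = -1 ∨ ⟪ϖ i₀, γ⟫ = 0 ∨ ⟪ϖ i₀, γ⟫ = 1) :
    ∀ γ ∈ Δ, d γ = -1 ∨ d γ = 0 ∨ d γ = 1 := by
  intro γ hγ
  have key : ⟪ϖ i₀, γ⟫ = B.repr γ i₀ := by
    conv_lhs => rw [← B.sum_repr γ]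
    rw [inner_sum]
    have he : ∀ i ∈ Finset.univ, ⟪ϖ i₀, B.repr γ i • B i⟫
        = if i = i₀ then B.repr γ i else 0 := by
      intro i _
      rw [real_inner_smul_right, real_inner_comm, hϖ]
      by_cases hii : i = i₀ <;> simp [hii]
    rw [Finset.sum_congr rfl he, Finset.sum_ite_eq' Finset.univ i₀ (fun i => B.repr γ i)]
    simp
  have hd := hstd γ hγ
  rcases hms γ hγ with h1 | h1 | h1
  · left
    have : (d γ : ℝ) = -1 := by rw [hd, ← key, h1]
    exact_mod_cast this
  · right; left
    have : (d γ : ℝ) = 0 := by rw [hd, ← key, h1]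
    exact_mod_cast this
  · right; right
    have : (d γ : ℝ) = 1 := by rw [hd, ← key, h1]
    exact_mod_cast this

end GradedRootSystem
end Aux6

/-- In the 1-standard case: `η(W⁰_min) = {η(w) : k_α(w) ≥ -1 ∀α}` and
`η(W⁰_max) = {η(w) : k_α(w) ≤ 1 ∀α}`; in the minuscule (abelian) case
`W⁰_min = W⁰_max = W⁰`. -/
theorem stmt15 (Δ : Set V) (d : V → ℤ) (Pos : Set V)
    (h : GradedRootSystem Δ d Pos)
    {ι : Type*} [Fintype ι] [DecidableEq ι] (B : Module.Basis ι ℝ V)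
    (hB : ∀ i, B i ∈ simpleRoots Pos) (hB' : simpleRoots Pos ⊆ Set.range B)
    (ϖ : ι → V) (hϖ : ∀ i j, ⟪B i, ϖ j⟫ = if i = j then 1 else 0)
    (i₀ : ι) (hstd : ∀ γ ∈ Δ, (d γ : ℝ) = B.repr γ i₀) :
    ((fun w : V ≃ₗ[ℝ] V => fun i => d (w.symm (B i))) '' Wmin Δ d Pos =
      (fun w : V ≃ₗ[ℝ] V => fun i => d (w.symm (B i))) ''
        {w ∈ W0 Δ d Pos | ∀ i, -1 ≤ d (w.symm (B i))}) ∧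
    ((fun w : V ≃ₗ[ℝ] V => fun i => d (w.symm (B i))) '' Wmax Δ d Pos =
      (fun w : V ≃ₗ[ℝ] V => fun i => d (w.symm (B i))) ''
        {w ∈ W0 Δ d Pos | ∀ i, d (w.symm (B i)) ≤ 1}) ∧
    ((∀ γ ∈ Δ, ⟪ϖ i₀, γ⟫ = -1 ∨ ⟪ϖ i₀, γ⟫ = 0 ∨ ⟪ϖ i₀, γ⟫ = 1) →
      Wmin Δ d Pos = W0 Δ d Pos ∧ Wmax Δ d Pos = W0 Δ d Pos) := by
  
  refine ⟨by rw [h.min_char B hB hB'], by rw [h.max_char B hB hB'], ?_⟩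
  intro hms
  exact h.minuscule_eq (h.minuscule_level B ϖ hϖ i₀ hstd hms)
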